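/- Let a, b > 0 and k ∈ {1, 2}. Let ν be the law of Z = X·Y, where X and Y are independent, X Gamma-distributed with shape a and rate a and Y Gamma-distributed with shape b and rate b. For each S > 0 let μ(S) > 0 be the unique water level of ν at S, and let C̄(S) = (1/k)·∫ max(log(λ/μ(S)), 0) dν(λ) be the waterfilling capacity. Then lim_{S→∞} [ C̄(S) − (1/k) log S ] = (1/k)·[ ψ(a) + ψ(b) − log(a·b) ]. -/

import Mathlib

open MeasureTheory Real Filter ProbabilityTheory Set
open scoped ENNReal

/-- The digamma function `ψ(s) = d/ds log Γ(s)`. -/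
noncomputable def digamma (s : ℝ) : ℝ :=
  deriv (fun t : ℝ => Real.log (Real.Gamma t)) s



lemma complexGammaAux (a : ℝ) (ha : 0 < a) :
    MeasureTheory.IntegrableOn
      (fun t : ℝ => (t:ℂ) ^ ((a:ℂ) - 1) • (Real.log t • (Real.exp (-t) : ℂ))) (Set.Ioi 0) ∧
    HasDerivAt Complex.GammaIntegral
      (∫ t : ℝ in Set.Ioi 0, (t:ℂ) ^ ((a:ℂ) - 1) • (Real.log t • (Real.exp (-t) : ℂ))) (a:ℂ) := by
  have hre : (0:ℝ) < ((a:ℂ)).re := by simpa using ha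
  have h := mellin_hasDerivAt_of_isBigO_rpow (E := ℂ)
    (f := fun x : ℝ => (Real.exp (-x) : ℂ)) (s := (a:ℂ)) (a := (a:ℂ).re + 1) (b := 0)
    ?_ ?_ (lt_add_one _) ?_ hre
  · rw [Complex.GammaIntegral_eq_mellin]
    exact ⟨h.1, h.2⟩
  · refine (Continuous.continuousOn ?_).locallyIntegrableOn measurableSet_Ioi
    exact Complex.continuous_ofReal.comp (Real.continuous_exp.comp continuous_neg)
  · rw [← Asymptotics.isBigO_norm_left]
    simp_rw [Complex.norm_real,
      Asymptotics.isBigO_norm_left]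
    simpa only [neg_one_mul] using
      (isLittleO_exp_neg_mul_rpow_atTop zero_lt_one _).isBigO
  · simp_rw [neg_zero, Real.rpow_zero]
    refine Asymptotics.isBigO_const_of_tendsto (?_ : Tendsto _ _ (nhds (1 : ℂ))) one_ne_zero
    rw [(by simp : (1 : ℂ) = Real.exp (-0))]
    exact (Complex.continuous_ofReal.comp
      (Real.continuous_exp.comp continuous_neg)).continuousWithinAt

lemma gammaIntegrand_eq (a : ℝ) {t : ℝ} (ht : 0 < t) :
    (t:ℂ) ^ ((a:ℂ) - 1) • (Real.log t • (Real.exp (-t) : ℂ))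
      = ((t ^ (a - 1) * (Real.log t * Real.exp (-t)) : ℝ) : ℂ) := by
  rw [Complex.real_smul, smul_eq_mul,
    show ((a:ℂ) - 1) = ((a - 1 : ℝ) : ℂ) by push_cast; ring,
    ← Complex.ofReal_cpow ht.le]
  push_cast
  ring

lemma integrableOn_gammaLog (a : ℝ) (ha : 0 < a) :
    MeasureTheory.IntegrableOn
      (fun t : ℝ => t ^ (a - 1) * (Real.log t * Real.exp (-t))) (Set.Ioi 0) := by
  refine (complexGammaAux a ha).1.re.congr ?_
  refine (ae_restrict_iff' measurableSet_Ioi).2 (ae_of_all _ fun t ht => ?_)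
  show RCLike.re _ = _
  rw [gammaIntegrand_eq a ht]
  exact Complex.ofReal_re _

lemma hasDerivAt_realGamma (a : ℝ) (ha : 0 < a) :
    HasDerivAt Real.Gamma
      (∫ t in Set.Ioi 0, t ^ (a - 1) * (Real.log t * Real.exp (-t))) a := by
  obtain ⟨hint, hder⟩ := complexGammaAux a ha
  have h1 : HasDerivAt Complex.Gamma
      (∫ t : ℝ in Set.Ioi (0:ℝ), (t:ℂ) ^ ((a:ℂ) - 1) • (Real.log t • (Real.exp (-t) : ℂ))) (a:ℂ) := by
    refine hder.congr_of_eventuallyEq ?_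
    have hmem : (Complex.re ⁻¹' Set.Ioi 0) ∈ nhds (a:ℂ) :=
      (Complex.continuous_re.isOpen_preimage _ isOpen_Ioi).mem_nhds (by simpa using ha)
    filter_upwards [hmem] with z hz
    exact Complex.Gamma_eq_integral hz
  have h2 := h1.real_of_complex
  have hre : (∫ t : ℝ in Set.Ioi (0:ℝ), (t:ℂ) ^ ((a:ℂ) - 1) • (Real.log t • (Real.exp (-t) : ℂ))).re
      = ∫ t in Set.Ioi 0, t ^ (a - 1) * (Real.log t * Real.exp (-t)) := by
    rw [show (∫ t : ℝ in Set.Ioi (0:ℝ), (t:ℂ) ^ ((a:ℂ) - 1) • (Real.log t • (Real.exp (-t) : ℂ))).re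
        = RCLike.re (∫ t : ℝ in Set.Ioi (0:ℝ),
            (t:ℂ) ^ ((a:ℂ) - 1) • (Real.log t • (Real.exp (-t) : ℂ))) from rfl,
      ← integral_re hint]
    refine setIntegral_congr_fun measurableSet_Ioi fun t ht => ?_
    show RCLike.re _ = _
    rw [gammaIntegrand_eq a ht]
    exact Complex.ofReal_re _
  rw [hre] at h2
  exact h2

lemma digamma_eq (a : ℝ) (ha : 0 < a) :
    digamma a = (∫ t in Set.Ioi 0, t ^ (a - 1) * (Real.log t * Real.exp (-t))) / Real.Gamma a :=
  ((hasDerivAt_realGamma a ha).log (Real.Gamma_pos_of_pos ha).ne').deriv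

-- the auxiliary function for the substitution t = r x
lemma gamma_g_int (a r : ℝ) (ha : 0 < a) (hr : 0 < r) :
    MeasureTheory.IntegrableOn
      (fun t : ℝ => t ^ (a - 1) * ((Real.log t - Real.log r) * Real.exp (-t))) (Set.Ioi 0) := by
  have h1 := integrableOn_gammaLog a ha
  have h2 : MeasureTheory.IntegrableOn
      (fun t : ℝ => t ^ (a - 1) * Real.exp (-t)) (Set.Ioi 0) := by
    refine MeasureTheory.IntegrableOn.congr_fun (Real.GammaIntegral_convergent ha)
      (fun t _ => by ring) measurableSet_Ioi
  refine MeasureTheory.IntegrableOn.congr_fun (h1.sub (h2.const_mul (Real.log r)))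
    (fun t _ => ?_) measurableSet_Ioi
  simp only [Pi.sub_apply]
  ring

lemma gamma_g_val (a r : ℝ) (ha : 0 < a) (hr : 0 < r) :
    ∫ t in Set.Ioi (0:ℝ), t ^ (a - 1) * ((Real.log t - Real.log r) * Real.exp (-t))
      = (digamma a - Real.log r) * Real.Gamma a := by
  have h1 := integrableOn_gammaLog a ha
  have h2 : MeasureTheory.IntegrableOn
      (fun t : ℝ => Real.log r * (t ^ (a - 1) * Real.exp (-t))) (Set.Ioi 0) := by
    refine MeasureTheory.IntegrableOn.congr_fun
      ((Real.GammaIntegral_convergent ha).const_mul (Real.log r))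
      (fun t _ => by ring) measurableSet_Ioi
  have heq : ∀ t ∈ Set.Ioi (0:ℝ), t ^ (a - 1) * ((Real.log t - Real.log r) * Real.exp (-t))
      = t ^ (a - 1) * (Real.log t * Real.exp (-t)) - Real.log r * (t ^ (a - 1) * Real.exp (-t)) := by
    intro t _; ring
  rw [setIntegral_congr_fun measurableSet_Ioi heq, integral_sub h1 h2, integral_const_mul]
  have hGamma : ∫ t in Set.Ioi (0:ℝ), t ^ (a - 1) * Real.exp (-t) = Real.Gamma a := by
    rw [Real.Gamma_eq_integral ha]
    exact setIntegral_congr_fun measurableSet_Ioi fun t _ => by ring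
  rw [hGamma, digamma_eq a ha, sub_mul, div_mul_cancel₀]
  exact (Real.Gamma_pos_of_pos ha).ne'

lemma log_gammaMeasure (a r : ℝ) (ha : 0 < a) (hr : 0 < r) :
    MeasureTheory.Integrable Real.log (gammaMeasure a r) ∧
      ∫ x, Real.log x ∂(gammaMeasure a r) = digamma a - Real.log r := by
  set g : ℝ → ℝ := fun t => t ^ (a - 1) * ((Real.log t - Real.log r) * Real.exp (-t)) with hg
  have hmeas : Measurable fun x => (gammaPDFReal a r x).toNNReal :=
    (measurable_gammaPDFReal a r).real_toNNReal
  have hdens : gammaMeasure a r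
      = volume.withDensity (fun x => ((gammaPDFReal a r x).toNNReal : ℝ≥0∞)) := rfl
  -- pointwise identity on Ioi 0
  have hpt : ∀ x ∈ Set.Ioi (0:ℝ),
      gammaPDFReal a r x * Real.log x = (r / Real.Gamma a) * g (r * x) := by
    intro x hx
    have hx0 : (0:ℝ) < x := hx
    have hrx : (0:ℝ) < r * x := by positivity
    rw [hg]
    simp only [gammaPDFReal, if_pos hx0.le]
    rw [Real.log_mul hr.ne' hx0.ne', Real.mul_rpow hr.le hx0.le,
      Real.rpow_sub hr, Real.rpow_one]
    field_simp
    ring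
  -- the function x ↦ pdf x * log x equals the Ioi-indicator
  have hind : ∀ x : ℝ, gammaPDFReal a r x * Real.log x
      = Set.indicator (Set.Ioi 0) (fun x => gammaPDFReal a r x * Real.log x) x := by
    intro x
    rcases lt_trichotomy x 0 with h | h | h
    · rw [Set.indicator_of_notMem (by simpa using h.le.not_gt)]
      simp [gammaPDFReal, not_le.2 h]
    · subst h; simp [Set.indicator_of_notMem]
    · rw [Set.indicator_of_mem (show x ∈ Set.Ioi (0:ℝ) from h)]
  -- integrability on Ioi 0
  have hgint : MeasureTheory.IntegrableOn (fun x => gammaPDFReal a r x * Real.log x)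
      (Set.Ioi 0) := by
    have := ((integrableOn_Ioi_comp_mul_left_iff g 0 hr).2
      (by simpa using gamma_g_int a r ha hr)).const_mul (r / Real.Gamma a)
    exact MeasureTheory.IntegrableOn.congr_fun this
      (fun x hx => (hpt x hx).symm) measurableSet_Ioi
  have hvint : MeasureTheory.Integrable (fun x => gammaPDFReal a r x * Real.log x) := by
    rw [funext hind, integrable_indicator_iff measurableSet_Ioi]
    exact hgint
  constructor
  · rw [hdens, integrable_withDensity_iff_integrable_smul hmeas]
    refine hvint.congr (ae_of_all _ fun x => ?_)
    show gammaPDFReal a r x * Real.log x = (gammaPDFReal a r x).toNNReal • Real.log x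
    rw [NNReal.smul_def, Real.coe_toNNReal _ (gammaPDFReal_nonneg ha hr x), smul_eq_mul]
  · rw [hdens, integral_withDensity_eq_integral_smul hmeas]
    have : ∫ x, (gammaPDFReal a r x).toNNReal • Real.log x
        = ∫ x, gammaPDFReal a r x * Real.log x := by
      refine integral_congr_ae (ae_of_all _ fun x => ?_)
      show (gammaPDFReal a r x).toNNReal • Real.log x = gammaPDFReal a r x * Real.log x
      rw [NNReal.smul_def, Real.coe_toNNReal _ (gammaPDFReal_nonneg ha hr x), smul_eq_mul]
    rw [this, funext hind, integral_indicator measurableSet_Ioi,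
      setIntegral_congr_fun measurableSet_Ioi hpt, integral_const_mul,
      integral_comp_mul_left_Ioi g 0 hr]
    simp only [mul_zero, smul_eq_mul]
    rw [hg, gamma_g_val a r ha hr]
    field_simp

lemma gammaMeasure_Iic_zero (a r : ℝ) : gammaMeasure a r (Set.Iic 0) = 0 := by
  have h1 : gammaMeasure a r (Set.Iio 0) = 0 := by
    rw [gammaMeasure, withDensity_apply _ measurableSet_Iio]
    exact lintegral_gammaPDF_of_nonpos le_rfl
  have h2 : gammaMeasure a r ({0} : Set ℝ) = 0 := by
    rw [gammaMeasure, withDensity_apply _ (measurableSet_singleton 0)]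
    rw [Measure.restrict_eq_zero.2 (by simp)]
    simp
  have hset : Set.Iic (0:ℝ) = Set.Iio 0 ∪ {0} := by
    ext x; simp [le_iff_lt_or_eq]
  rw [hset]
  exact le_antisymm ((measure_union_le _ _).trans (by rw [h1, h2]; simp)) (zero_le)

/-- **High-SNR capacity of the Gamma–Gamma channel without pointing error.** Let `ν` be
the law of `Z = X·Y` with `X ~ Gamma(a,a)` and `Y ~ Gamma(b,b)` independent; let `μ(S)`
be the water level of `ν` at `S` and `C̄(S) = (1/k)·∫ max (log (λ/μ(S))) 0 dν` the
waterfilling capacity (`k ∈ {1,2}`). Then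
`C̄(S) - (1/k) log S → (1/k)·(ψ(a) + ψ(b) - log (a·b))` as `S → ∞`. -/
theorem capacity_highSNR_gammaGamma
    {Ω : Type*} [MeasurableSpace Ω] (P : Measure Ω) [IsProbabilityMeasure P]
    (a b : ℝ) (ha : 0 < a) (hb : 0 < b)
    (k : ℝ) (hk : k = 1 ∨ k = 2)
    (X Y : Ω → ℝ) (hX : Measurable X) (hY : Measurable Y)
    (hind : IndepFun X Y P)
    (hXlaw : Measure.map X P = gammaMeasure a a)
    (hYlaw : Measure.map Y P = gammaMeasure b b)
    (ν : Measure ℝ) (hνdef : ν = Measure.map (fun ω => X ω * Y ω) P)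
    (μfun : ℝ → ℝ)
    (hμ : ∀ S : ℝ, 0 < S → 0 < μfun S ∧ ∫ l, max (1 / μfun S - 1 / l) 0 ∂ν = S) :
    Tendsto
      (fun S => (1 / k) * (∫ l, max (Real.log (l / μfun S)) 0 ∂ν) - (1 / k) * Real.log S)
      atTop
      (nhds ((1 / k) * (digamma a + digamma b - Real.log (a * b)))) := by
  have hνprob : IsProbabilityMeasure ν := by
    rw [hνdef]; exact Measure.isProbabilityMeasure_map (hX.mul hY).aemeasurable
  -- a.e. positivity
  have hXpos : ∀ᵐ ω ∂P, 0 < X ω := by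
    have h0 : P (X ⁻¹' Set.Iic 0) = 0 := by
      rw [← Measure.map_apply hX measurableSet_Iic, hXlaw, gammaMeasure_Iic_zero]
    rw [ae_iff]
    convert h0 using 2
    ext ω; simp [not_lt]
  have hYpos : ∀ᵐ ω ∂P, 0 < Y ω := by
    have h0 : P (Y ⁻¹' Set.Iic 0) = 0 := by
      rw [← Measure.map_apply hY measurableSet_Iic, hYlaw, gammaMeasure_Iic_zero]
    rw [ae_iff]
    convert h0 using 2
    ext ω; simp [not_lt]
  have hνpos : ∀ᵐ l ∂ν, 0 < l := by
    rw [hνdef, ae_map_iff (by exact (hX.mul hY).aemeasurable : AEMeasurable (fun ω => X ω * Y ω) P) measurableSet_Ioi]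
    filter_upwards [hXpos, hYpos] with ω hx hy
    exact mul_pos hx hy
  -- integrability and value of ∫ log dν
  have hlogX_int : Integrable (fun ω => Real.log (X ω)) P := by
    have h := (log_gammaMeasure a a ha ha).1
    rw [← hXlaw] at h
    exact (integrable_map_measure Real.measurable_log.aestronglyMeasurable
      hX.aemeasurable).1 h
  have hlogY_int : Integrable (fun ω => Real.log (Y ω)) P := by
    have h := (log_gammaMeasure b b hb hb).1
    rw [← hYlaw] at h
    exact (integrable_map_measure Real.measurable_log.aestronglyMeasurable
      hY.aemeasurable).1 h
  have hlogmul : (fun ω => Real.log (X ω * Y ω))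
      =ᵐ[P] fun ω => Real.log (X ω) + Real.log (Y ω) := by
    filter_upwards [hXpos, hYpos] with ω hx hy
    exact Real.log_mul hx.ne' hy.ne'
  have hlogν_int : Integrable Real.log ν := by
    rw [hνdef]
    refine (integrable_map_measure Real.measurable_log.aestronglyMeasurable
      (hX.mul hY).aemeasurable).2 ?_
    exact ((hlogX_int.add hlogY_int).congr hlogmul.symm)
  have hlogν_val : ∫ l, Real.log l ∂ν = digamma a + digamma b - Real.log (a * b) := by
    rw [hνdef, integral_map (by exact (hX.mul hY).aemeasurable : AEMeasurable (fun ω => X ω * Y ω) P) Real.measurable_log.aestronglyMeasurable,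
      integral_congr_ae hlogmul, integral_add hlogX_int hlogY_int]
    have hxv : ∫ ω, Real.log (X ω) ∂P = digamma a - Real.log a := by
      rw [← integral_map hX.aemeasurable Real.measurable_log.aestronglyMeasurable, hXlaw]
      exact (log_gammaMeasure a a ha ha).2
    have hyv : ∫ ω, Real.log (Y ω) ∂P = digamma b - Real.log b := by
      rw [← integral_map hY.aemeasurable Real.measurable_log.aestronglyMeasurable, hYlaw]
      exact (log_gammaMeasure b b hb hb).2
    rw [hxv, hyv, Real.log_mul ha.ne' hb.ne']
    ring
  -- μfun S ≤ 1/S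
  have hm_le : ∀ S : ℝ, 0 < S → μfun S ≤ 1 / S := by
    intro S hS
    obtain ⟨hm0, hint⟩ := hμ S hS
    have hii : Integrable (fun l => max (1 / μfun S - 1 / l) 0) ν := by
      by_contra hni
      rw [integral_undef hni] at hint
      exact hS.ne' hint.symm
    have hmono : ∫ l, max (1 / μfun S - 1 / l) 0 ∂ν ≤ 1 / μfun S := by
      have hmono' : ∫ l, max (1 / μfun S - 1 / l) 0 ∂ν ≤ ∫ _, (1 / μfun S : ℝ) ∂ν := by
        refine integral_mono_ae hii (integrable_const _) ?_
        filter_upwards [hνpos] with l hl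
        have h1l : 0 ≤ 1 / l := by positivity
        have h1m : 0 ≤ 1 / μfun S := by positivity
        exact max_le (by linarith) h1m
      simpa using hmono'
    have hle : S ≤ 1 / μfun S := by rw [hint] at hmono; exact hmono
    have h1 := (le_div_iff₀ hm0).1 hle
    exact (le_div_iff₀ hS).2 (by nlinarith)
  have hm_pos : ∀ᶠ S in atTop, 0 < μfun S :=
    eventually_atTop.2 ⟨1, fun S hS => (hμ S (by linarith)).1⟩
  have hm0 : Tendsto μfun atTop (nhds 0) := by
    refine squeeze_zero' (hm_pos.mono fun S hS => hS.le)
      (eventually_atTop.2 ⟨1, fun S hS => hm_le S (by linarith)⟩) ?_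
    exact Tendsto.congr (fun x => (one_div x).symm) tendsto_inv_atTop_zero
  -- μfun S * S → 1
  have hprod : Tendsto (fun S => μfun S * S) atTop (nhds 1) := by
    have key : (fun S => ∫ l, max (1 - μfun S / l) 0 ∂ν) =ᶠ[atTop]
        (fun S => μfun S * S) := by
      filter_upwards [eventually_gt_atTop 0] with S hS
      obtain ⟨hm0', hint⟩ := hμ S hS
      have heq : μfun S * ∫ l, max (1 / μfun S - 1 / l) 0 ∂ν
          = ∫ l, max (1 - μfun S / l) 0 ∂ν := by
        rw [← integral_const_mul]
        refine integral_congr_ae ?_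
        filter_upwards [hνpos] with l hl
        rw [mul_max_of_nonneg _ _ hm0'.le, mul_zero, mul_sub, mul_one_div, mul_one_div,
          div_self hm0'.ne']
      show (∫ l, max (1 - μfun S / l) 0 ∂ν) = μfun S * S
      rw [← heq, hint]
    have hdom : Tendsto (fun S => ∫ l, max (1 - μfun S / l) 0 ∂ν) atTop
        (nhds (∫ _, (1:ℝ) ∂ν)) := by
      refine tendsto_integral_filter_of_dominated_convergence (fun _ => (1:ℝ))
        (Eventually.of_forall fun S => ?_) ?_ (integrable_const _) ?_
      · exact ((measurable_const.sub (measurable_const.div measurable_id)).max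
          measurable_const).aestronglyMeasurable
      · filter_upwards [hm_pos] with S hmS
        filter_upwards [hνpos] with l hl
        rw [Real.norm_eq_abs, abs_of_nonneg (le_max_right _ _)]
        have : 0 ≤ μfun S / l := by positivity
        exact max_le (by linarith) zero_le_one
      · filter_upwards [hνpos] with l hl
        have hc : ContinuousAt (fun x : ℝ => max (1 - x / l) 0) 0 :=
          ((continuous_const.sub (continuous_id.div_const l)).max continuous_const).continuousAt
        have := hc.tendsto.comp hm0
        simpa [max_eq_left zero_le_one, Function.comp_def] using this
    have h1 : (∫ _, (1:ℝ) ∂ν) = 1 := by simp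
    rw [h1] at hdom
    exact Tendsto.congr' key hdom
  have hlogprod : Tendsto (fun S => Real.log (μfun S * S)) atTop (nhds 0) := by
    have := (Real.continuousAt_log one_ne_zero).tendsto.comp hprod
    simpa [Function.comp_def] using this
  have hlogm_bot : Tendsto (fun S => Real.log (μfun S)) atTop atBot := by
    refine Real.tendsto_log_nhdsGT_zero.comp ?_
    exact tendsto_nhdsWithin_of_tendsto_nhds_of_eventually_within _ hm0 hm_pos
  -- dominated bound for G
  have hbound : ∀ᶠ S in atTop, ∀ᵐ l ∂ν,
      ‖max (Real.log l) (Real.log (μfun S))‖ ≤ |Real.log l| := by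
    filter_upwards [eventually_ge_atTop 1] with S hS1
    have hS : (0:ℝ) < S := lt_of_lt_of_le one_pos hS1
    have hm' := (hμ S hS).1
    have hmle : μfun S ≤ 1 := (hm_le S hS).trans ((div_le_one hS).2 hS1)
    have hlm : Real.log (μfun S) ≤ 0 := Real.log_nonpos hm'.le hmle
    refine ae_of_all _ fun l => ?_
    rw [Real.norm_eq_abs]
    rcases le_or_gt (Real.log (μfun S)) (Real.log l) with h | h
    · rw [max_eq_left h]
    · rw [max_eq_right h.le, abs_of_nonpos hlm, abs_of_nonpos (by linarith)]
      linarith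
  have hGtend : Tendsto (fun S => ∫ l, max (Real.log l) (Real.log (μfun S)) ∂ν) atTop
      (nhds (∫ l, Real.log l ∂ν)) := by
    refine tendsto_integral_filter_of_dominated_convergence (fun l => |Real.log l|)
      (Eventually.of_forall fun S =>
        (Real.measurable_log.max measurable_const).aestronglyMeasurable)
      hbound hlogν_int.abs ?_
    refine ae_of_all _ fun l => ?_
    refine Tendsto.congr' ?_ tendsto_const_nhds
    filter_upwards [hlogm_bot.eventually (eventually_le_atBot (Real.log l))] with S hS
    exact (max_eq_left hS).symm
  -- main eventual equality
  have hmain : ∀ᶠ S in atTop,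
      (1 / k) * ((∫ l, max (Real.log l) (Real.log (μfun S)) ∂ν) - Real.log (μfun S * S))
        = (1 / k) * (∫ l, max (Real.log (l / μfun S)) 0 ∂ν) - (1 / k) * Real.log S := by
    filter_upwards [eventually_ge_atTop 1, hbound] with S hS1 hbS
    have hS : (0:ℝ) < S := lt_of_lt_of_le one_pos hS1
    have hm' := (hμ S hS).1
    have hGint : Integrable (fun l => max (Real.log l) (Real.log (μfun S))) ν :=
      Integrable.mono' hlogν_int.abs
        (Real.measurable_log.max measurable_const).aestronglyMeasurable hbS
    have h1 : ∫ l, max (Real.log (l / μfun S)) 0 ∂ν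
        = ∫ l, (max (Real.log l) (Real.log (μfun S)) - Real.log (μfun S)) ∂ν := by
      refine integral_congr_ae ?_
      filter_upwards [hνpos] with l hl
      rw [Real.log_div hl.ne' hm'.ne',
        show (0:ℝ) = Real.log (μfun S) - Real.log (μfun S) by ring,
        max_sub_sub_right]
    have hμν : ν.real Set.univ = 1 := by simp
    rw [h1, integral_sub hGint (integrable_const _), integral_const, hμν, one_smul,
      Real.log_mul hm'.ne' hS.ne']
    ring
  have hfinal : Tendsto (fun S => (1 / k) *
      ((∫ l, max (Real.log l) (Real.log (μfun S)) ∂ν) - Real.log (μfun S * S))) atTop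
      (nhds ((1 / k) * ((digamma a + digamma b - Real.log (a * b)) - 0))) := by
    rw [← hlogν_val]
    exact ((hGtend.sub hlogprod).const_mul _)
  rw [show (1 / k) * (digamma a + digamma b - Real.log (a * b))
      = (1 / k) * ((digamma a + digamma b - Real.log (a * b)) - 0) by ring]
  exact Tendsto.congr' hmain hfinal
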